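/- Define f(v) := 1 + Σ_T ((t+1)/t)^{κ(v^T)} t^{|T|+1} summed over subsets T of positions of v (a polynomial in t). Then for any words u, v with |u| + |v| = n - 3, the difference f(u·y·x·v) - f(u·y·y·v̄) is a polynomial in t of degree n-1 with strictly positive coefficients in degrees 0 through n-1, where v̄ is the word v with x's and y's exchanged. -/

import Mathlib

/-- `κ(w) = 2 + #{i : w_i ≠ w_{i+1}}` for nonempty `w`, and `κ(empty) = 1`. -/
def kappa (w : List Bool) : ℕ :=
  if w = [] then 1 else 2 + (w.zip w.tail).countP (fun p => p.1 != p.2)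

/-- The subword of `v` at the (1-indexed) positions in `T`. -/
def subword (v : List Bool) (T : Finset ℕ) : List Bool :=
  ((v.zipIdx.map Prod.swap).filter (fun p => decide (p.1 + 1 ∈ T))).map Prod.snd

/-- The `f`-polynomial `F_v(t) = 1 + ∑_{T ⊆ [|v|]} ((t+1)/t)^{κ(v^T)} t^{|T|+1}`,
written with the power of `t` as `t^{|T|+1-κ(v^T)}` (valid since `κ(v^T) ≤ |T|+1`). -/
noncomputable def fPoly (v : List Bool) : Polynomial ℤ :=
  1 + ∑ T ∈ (Finset.Icc 1 v.length).powerset,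
      (Polynomial.X + 1) ^ kappa (subword v T) *
        Polynomial.X ^ (T.card + 1 - kappa (subword v T))

def List.enumFrom {α : Type*} (n : ℕ) (l : List α) : List (ℕ × α) :=
  (l.zipIdx n).map Prod.swap

def List.enum {α : Type*} (l : List α) : List (ℕ × α) := l.zipIdx.map Prod.swap

theorem List.zipIdx_swap_eq {α : Type*} (l : List α) : l.zipIdx.map Prod.swap = l.enum := rfl

@[simp] theorem List.enumFrom_zero' {α : Type*} (l : List α) : List.enumFrom 0 l = l.enum := rfl

theorem List.enumFrom_cons {α : Type*} (n : ℕ) (a : α) (l : List α) :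
    List.enumFrom n (a :: l) = (n, a) :: List.enumFrom (n + 1) l := rfl

theorem List.mem_enumFrom {α : Type*} {x : α} {i j : ℕ} {xs : List α}
    (h : (i, x) ∈ List.enumFrom j xs) : j ≤ i ∧ i < j + xs.length := by
  unfold List.enumFrom at h
  obtain ⟨⟨y, k⟩, hk, he⟩ := List.mem_map.1 h
  simp only [Prod.swap, Prod.mk.injEq] at he
  obtain ⟨rfl, rfl⟩ := he
  exact ⟨(List.mem_zipIdx hk).1, (List.mem_zipIdx hk).2.1⟩

theorem List.enum_append {α : Type*} (xs ys : List α) :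
    (xs ++ ys).enum = xs.enum ++ List.enumFrom xs.length ys := by
  simp only [List.enum, List.enumFrom, List.zipIdx_append, List.map_append, Nat.zero_add]

theorem List.enumFrom_map {α β : Type*} (n : ℕ) (f : α → β) (l : List α) :
    List.enumFrom n (l.map f) = (List.enumFrom n l).map (Prod.map id f) := by
  unfold List.enumFrom
  rw [List.zipIdx_map, List.map_map, List.map_map]
  rfl

theorem List.enum_map_fst {α : Type*} (l : List α) :
    l.enum.map Prod.fst = List.range l.length := by
  simp only [List.enum, List.map_map]
  rw [show (Prod.fst ∘ Prod.swap : α × ℕ → ℕ) = Prod.snd from rfl, List.zipIdx_map_snd,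
    List.range_eq_range']

namespace Stmt9
open Polynomial Finset List

/-- descent count -/
def dd (l : List Bool) : ℕ := (l.zip l.tail).countP (fun p => p.1 != p.2)

lemma kappa_eq (l : List Bool) : kappa l = if l = [] then 1 else 2 + dd l := rfl

lemma kappa_ne_nil {l : List Bool} (h : l ≠ []) : kappa l = 2 + dd l := by
  rw [kappa_eq, if_neg h]

lemma dd_cons_cons (a b : Bool) (l : List Bool) :
    dd (a :: b :: l) = (if a = b then 0 else 1) + dd (b :: l) := by
  simp only [dd, List.zip_cons_cons, List.tail_cons, List.countP_cons]
  cases a <;> cases b <;> simp <;> omega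

lemma dd_append (l1 l2 : List Bool) (h1 : l1 ≠ []) (h2 : l2 ≠ []) :
    dd (l1 ++ l2) = dd l1 + dd l2 +
      (if l1.getLast? = l2.head? then 0 else 1) := by
  induction l1 with
  | nil => exact absurd rfl h1
  | cons a t ih =>
    cases t with
    | nil =>
      cases l2 with
      | nil => exact absurd rfl h2
      | cons b t2 =>
        simp only [List.singleton_append, dd_cons_cons]
        simp [dd, List.getLast?_singleton, List.head?_cons]
        cases a <;> cases b <;> simp <;> omega
    | cons c t' =>
      have := ih (by simp)
      simp only [List.cons_append] at this ⊢
      rw [dd_cons_cons, this, dd_cons_cons]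
      have : (a :: c :: t').getLast? = (c :: t').getLast? := by
        simp [List.getLast?_cons_cons]
      rw [this]
      omega

lemma dd_map_not (l : List Bool) : dd (l.map (fun b => !b)) = dd l := by
  unfold dd
  rw [← List.map_tail, List.zip_map, List.countP_map]
  congr 1
  funext p
  obtain ⟨x, y⟩ := p
  cases x <;> cases y <;> rfl

lemma kappa_map_not (l : List Bool) : kappa (l.map (fun b => !b)) = kappa l := by
  rcases eq_or_ne l [] with rfl | h
  · rfl
  · rw [kappa_ne_nil (by simpa using h), kappa_ne_nil h, dd_map_not]



lemma enumFrom_shift {α : Type*} (q : List α) (n : ℕ) :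
    List.enumFrom n q = q.enum.map (fun x => (x.1 + n, x.2)) := by
  have key : ∀ (q : List α) (m n : ℕ),
      List.enumFrom (m + n) q = (List.enumFrom m q).map (fun x => (x.1 + n, x.2)) := by
    intro q
    induction q with
    | nil => intro m n; rfl
    | cons a t ih =>
      intro m n
      simp only [List.enumFrom_cons, List.map_cons]
      rw [show m + n + 1 = (m + 1) + n from by omega, ih]
  simpa using key q 0 n

lemma mem_enum_fst_lt {α : Type*} {x : ℕ × α} {l : List α} (h : x ∈ l.enum) :
    x.1 < l.length := by
  obtain ⟨i, b⟩ := x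
  have := List.mem_enumFrom (show (i, b) ∈ List.enumFrom 0 l from h)
  omega

lemma subword_append_left (p q : List Bool) (T : Finset ℕ)
    (hT : ∀ i ∈ T, i ≤ p.length) : subword (p ++ q) T = subword p T := by
  unfold subword
  simp only [List.zipIdx_swap_eq]
  rw [List.enum_append, List.filter_append, List.map_append]
  have h0 : (List.enumFrom p.length q).filter (fun x => decide (x.1 + 1 ∈ T)) = [] := by
    rw [List.filter_eq_nil_iff]
    rintro ⟨i, b⟩ hx
    have hi := (List.mem_enumFrom hx).1
    simp only [decide_eq_true_eq]
    intro hmem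
    exact absurd (hT _ hmem) (by omega)
  rw [h0, List.map_nil, List.append_nil]

lemma subword_append_right (p q : List Bool) (T : Finset ℕ)
    (hT : ∀ i ∈ T, p.length + 1 ≤ i) :
    subword (p ++ q) T = subword q (T.image (fun i => i - p.length)) := by
  unfold subword
  simp only [List.zipIdx_swap_eq]
  rw [List.enum_append, List.filter_append, List.map_append]
  have h0 : p.enum.filter (fun x => decide (x.1 + 1 ∈ T)) = [] := by
    rw [List.filter_eq_nil_iff]
    rintro ⟨i, b⟩ hx
    have hi := mem_enum_fst_lt hx
    simp only [decide_eq_true_eq]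
    intro hmem
    exact absurd (hT _ hmem) (by omega)
  rw [h0, List.map_nil, List.nil_append]
  rw [enumFrom_shift, List.filter_map, List.map_map]
  congr 1
  · congr 1
    funext x
    simp only [Function.comp_apply, decide_eq_decide]
    constructor
    · intro hm
      exact Finset.mem_image.2 ⟨x.1 + p.length + 1, hm, by omega⟩
    · intro hm
      obtain ⟨t, ht, htx⟩ := Finset.mem_image.1 hm
      have := hT t ht
      have : t = x.1 + p.length + 1 := by omega
      rwa [← this]

lemma subword_union (v : List Bool) (A B : Finset ℕ) (k : ℕ) (hk : k ≤ v.length)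
    (hA : ∀ i ∈ A, i ≤ k) (hB : ∀ i ∈ B, k + 1 ≤ i) :
    subword v (A ∪ B) = subword v A ++ subword v B := by
  classical
  conv_lhs => rw [← List.take_append_drop k v]
  conv_rhs => rw [← List.take_append_drop k v]
  have hlen : (v.take k).length = k := by simp [min_eq_left hk]
  unfold subword
  simp only [List.zipIdx_swap_eq]
  rw [List.enum_append, List.filter_append, List.filter_append, List.filter_append]
  have hAd : (List.enumFrom (v.take k).length (v.drop k)).filter
      (fun x => decide (x.1 + 1 ∈ A)) = [] := by
    rw [List.filter_eq_nil_iff]; rintro ⟨i, b⟩ hx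
    have hi := (List.mem_enumFrom hx).1
    simp only [decide_eq_true_eq]; intro hmem
    have := hA _ hmem; omega
  have hBt : (v.take k).enum.filter (fun x => decide (x.1 + 1 ∈ B)) = [] := by
    rw [List.filter_eq_nil_iff]; rintro ⟨i, b⟩ hx
    have hi := mem_enum_fst_lt hx
    rw [hlen] at hi
    simp only [decide_eq_true_eq]; intro hmem
    have := hB _ hmem; omega
  have hUt : (v.take k).enum.filter (fun x => decide (x.1 + 1 ∈ A ∪ B)) =
      (v.take k).enum.filter (fun x => decide (x.1 + 1 ∈ A)) := by
    apply List.filter_congr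
    rintro ⟨i, b⟩ hx
    have hi := mem_enum_fst_lt hx
    rw [hlen] at hi
    simp only [decide_eq_decide, Finset.mem_union]
    constructor
    · rintro (h | h)
      · exact h
      · exact absurd (hB _ h) (by omega)
    · exact Or.inl
  have hUd : (List.enumFrom (v.take k).length (v.drop k)).filter
        (fun x => decide (x.1 + 1 ∈ A ∪ B)) =
      (List.enumFrom (v.take k).length (v.drop k)).filter
        (fun x => decide (x.1 + 1 ∈ B)) := by
    apply List.filter_congr
    rintro ⟨i, b⟩ hx
    have hi := (List.mem_enumFrom hx).1
    rw [hlen] at hi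
    simp only [decide_eq_decide, Finset.mem_union]
    constructor
    · rintro (h | h)
      · exact absurd (hA _ h) (by omega)
      · exact h
    · exact Or.inr
  rw [hUt, hUd, hAd, hBt]
  simp

lemma subword_map (f : Bool → Bool) (v : List Bool) (T : Finset ℕ) :
    subword (v.map f) T = (subword v T).map f := by
  unfold subword
  simp only [List.zipIdx_swap_eq]
  rw [show (v.map f).enum = List.enumFrom 0 (v.map f) from rfl, List.enumFrom_map,
    List.filter_map, List.map_map, List.map_map]
  rfl

lemma countP_range (q : ℕ → Bool) (n : ℕ) :
    (List.range n).countP q = ((Finset.range n).filter (fun i => q i)).card := by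
  induction n with
  | zero => rfl
  | succ n ih =>
    rw [List.range_succ, List.countP_append, Finset.range_add_one, Finset.filter_insert]
    by_cases h : q n = true
    · rw [if_pos h, Finset.card_insert_of_notMem (by simp)]
      simp [h, ih]
    · rw [if_neg h]
      simp [List.countP_cons, h, ih]

lemma subword_length (v : List Bool) (T : Finset ℕ) (hT : T ⊆ Finset.Icc 1 v.length) :
    (subword v T).length = T.card := by
  classical
  unfold subword
  simp only [List.zipIdx_swap_eq]
  rw [List.length_map, ← List.countP_eq_length_filter]
  have h1 : v.enum.countP (fun x => decide (x.1 + 1 ∈ T)) =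
      (List.range v.length).countP (fun i => decide (i + 1 ∈ T)) := by
    rw [← List.enum_map_fst v, List.countP_map]
    rfl
  rw [h1, countP_range]
  refine Finset.card_bij' (fun i _ => i + 1) (fun t _ => t - 1) ?_ ?_ ?_ ?_
  · intro i hi
    exact of_decide_eq_true (Finset.mem_filter.1 hi).2
  · intro t ht
    have := Finset.mem_Icc.1 (hT ht)
    simp only [Finset.mem_filter, Finset.mem_range]
    refine ⟨by omega, ?_⟩
    have h3 : t - 1 + 1 = t := by omega
    rw [h3]; exact decide_eq_true ht
  · intro i hi; show i + 1 - 1 = i; omega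
  · intro t ht
    have := Finset.mem_Icc.1 (hT ht)
    show t - 1 + 1 = t
    omega



/-- `pt c k = (X+1)^(c-1) * X^(k+1-c)`, the "half term". -/
noncomputable def pt (c k : ℕ) : Polynomial ℤ := (X + 1) ^ (c - 1) * X ^ (k + 1 - c)

lemma pt_coeff_nonneg (c k d : ℕ) : 0 ≤ (pt c k).coeff d := by
  unfold pt
  rw [Polynomial.coeff_mul_X_pow']
  split
  · rw [Polynomial.coeff_X_add_one_pow]
    positivity
  · exact le_refl 0

lemma ptX_coeff_nonneg (c k d : ℕ) : 0 ≤ (pt c k * X).coeff d := by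
  rw [show (X : Polynomial ℤ) = X ^ 1 from (pow_one _).symm, Polynomial.coeff_mul_X_pow']
  split
  · exact pt_coeff_nonneg _ _ _
  · exact le_refl 0

lemma pt_monic (c k : ℕ) : (pt c k).Monic := by
  unfold pt
  have h : (X + 1 : Polynomial ℤ) = X + C 1 := by rw [Polynomial.C_1]
  rw [h]
  exact ((Polynomial.monic_X_add_C 1).pow _).mul (Polynomial.monic_X_pow _)

lemma pt_natDegree (c k : ℕ) (h2 : 2 ≤ c) (hk : c ≤ k + 1) : (pt c k).natDegree = k := by
  unfold pt
  have h : (X + 1 : Polynomial ℤ) = X + C 1 := by rw [Polynomial.C_1]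
  rw [h, Polynomial.Monic.natDegree_mul ((Polynomial.monic_X_add_C 1).pow _)
    (Polynomial.monic_X_pow _), Polynomial.natDegree_pow, Polynomial.natDegree_X_pow,
    Polynomial.natDegree_X_add_C]
  omega

lemma ptX_natDegree (c k : ℕ) (h2 : 2 ≤ c) (hk : c ≤ k + 1) :
    (pt c k * X).natDegree = k + 1 := by
  rw [Polynomial.Monic.natDegree_mul (pt_monic c k) Polynomial.monic_X,
    pt_natDegree c k h2 hk, Polynomial.natDegree_X]

lemma ptX_coeff_top (c k : ℕ) (h2 : 2 ≤ c) (hk : c ≤ k + 1) :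
    (pt c k * X).coeff (k + 1) = 1 := by
  have hm : (pt c k * X).Monic := (pt_monic c k).mul Polynomial.monic_X
  have := hm.coeff_natDegree
  rwa [ptX_natDegree c k h2 hk] at this

lemma pt_natDegree_le (c k : ℕ) (h2 : 2 ≤ c) (hk : c ≤ k + 1) : (pt c k).natDegree ≤ k :=
  le_of_eq (pt_natDegree c k h2 hk)

lemma key_diff (cA cB kA kB : ℕ) (hA2 : 2 ≤ cA) (hB2 : 2 ≤ cB)
    (hA : cA ≤ kA + 1) (hB : cB ≤ kB + 1) :
    (X + 1) ^ (cA + cB - 1) * X ^ (kA + kB + 1 - (cA + cB - 1)) -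
      (X + 1) ^ (cA + cB - 2) * X ^ (kA + kB + 1 - (cA + cB - 2)) =
    pt cA kA * pt cB kB := by
  have e2 : kA + kB + 1 - (cA + cB - 1) = (kA + 1 - cA) + (kB + 1 - cB) := by omega
  have e4 : kA + kB + 1 - (cA + cB - 2) = (kA + 1 - cA) + (kB + 1 - cB) + 1 := by omega
  have e1 : cA + cB - 1 = (cA - 1) + (cB - 1) + 1 := by omega
  have e3 : cA + cB - 2 = (cA - 1) + (cB - 1) := by omega
  rw [e2, e4, e1, e3]
  unfold pt
  ring

lemma pt_card_succ (c k : ℕ) (hk : c ≤ k + 1) : pt c (k + 1) = pt c k * X := by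
  unfold pt
  have e : k + 1 + 1 - c = (k + 1 - c) + 1 := by omega
  rw [e, pow_succ]
  ring

lemma pt_succ_succ (c k : ℕ) (h2 : 1 ≤ c) : pt (c + 1) (k + 1) = (X + 1) * pt c k := by
  unfold pt
  have e1 : c + 1 - 1 = (c - 1) + 1 := by omega
  have e2 : k + 1 + 1 - (c + 1) = k + 1 - c := by omega
  rw [e1, e2, pow_succ]
  ring



lemma kappa_le (l : List Bool) (h : l ≠ []) : kappa l ≤ l.length + 1 := by
  rw [kappa_ne_nil h]
  have h1 : dd l ≤ (l.zip l.tail).length := List.countP_le_length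
  rw [List.length_zip, List.length_tail] at h1
  have : 1 ≤ l.length := List.length_pos_iff.2 h
  omega

lemma kappa_two_le (l : List Bool) (h : l ≠ []) : 2 ≤ kappa l := by
  rw [kappa_ne_nil h]; omega

lemma subword_empty (v : List Bool) : subword v ∅ = [] := by
  simp [subword]

lemma subword_single (c : Bool) : subword [c] {1} = [c] := by
  simp [subword]

/-- The words in question. -/
def ww (u v : List Bool) : List Bool := (u ++ [true]) ++ (false :: v)
def ww' (u v : List Bool) : List Bool := (u ++ [true]) ++ ((false :: v).map (fun b => !b))

lemma ww_eq (u v : List Bool) : ww u v = u ++ [true, false] ++ v := by simp [ww]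
lemma ww'_eq (u v : List Bool) : ww' u v = u ++ [true, true] ++ v.map (fun b => !b) := by
  simp [ww']

lemma ww_length (u v : List Bool) : (ww u v).length = u.length + v.length + 2 := by
  simp [ww]; omega
lemma ww'_length (u v : List Bool) : (ww' u v).length = u.length + v.length + 2 := by
  simp [ww']; omega

noncomputable def hA (w : List Bool) (A : Finset ℕ) : Polynomial ℤ :=
  if A = ∅ then 0 else
    (if (subword w A).getLast? = some true then 1 else -1) *
      pt (kappa (subword w A)) A.card

noncomputable def hB (w : List Bool) (B : Finset ℕ) : Polynomial ℤ :=
  if B = ∅ then 0 else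
    (if (subword w B).head? = some false then 1 else -1) *
      pt (kappa (subword w B)) B.card

section Words

variable (u v : List Bool)

lemma subA (A : Finset ℕ) (hA' : A ⊆ Finset.Icc 1 (u.length + 1)) :
    subword (ww u v) A = subword (u ++ [true]) A ∧
    subword (ww' u v) A = subword (u ++ [true]) A := by
  constructor <;>
  · apply subword_append_left
    intro i hi
    have := Finset.mem_Icc.1 (hA' hi)
    simp only [List.length_append, List.length_cons, List.length_nil]
    omega

lemma subB (B : Finset ℕ)
    (hB' : B ⊆ Finset.Icc (u.length + 2) (u.length + v.length + 2)) :
    subword (ww' u v) B = (subword (ww u v) B).map (fun b => !b) := by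
  have hlen : (u ++ [true]).length = u.length + 1 := by simp
  have hT : ∀ i ∈ B, (u ++ [true]).length + 1 ≤ i := by
    intro i hi
    have := Finset.mem_Icc.1 (hB' hi)
    omega
  unfold ww ww'
  rw [subword_append_right _ _ _ hT, subword_append_right _ _ _ hT, subword_map]

lemma subword_concat_last (p : List Bool) (c : Bool) :
    subword (p ++ [c]) {p.length + 1} = [c] := by
  rw [subword_append_right _ _ _ (by intro i hi; simp at hi; omega)]
  have h : ({p.length + 1} : Finset ℕ).image (fun i => i - p.length) = {1} := by
    rw [Finset.image_singleton]
    congr 1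
    omega
  rw [h, subword_single]

lemma subw_a1 : subword (ww u v) {u.length + 1} = [true] := by
  have h1 : subword (ww u v) {u.length + 1} = subword (u ++ [true]) {u.length + 1} :=
    (subA u v _ (by simp)).1
  rw [h1, show u.length + 1 = u.length + 1 from rfl]
  have := subword_concat_last u true
  rwa [show u.length = u.length from rfl] at this

lemma subw_a2 : subword (ww u v) {u.length + 2} = [false] := by
  have hw : ww u v = ((u ++ [true]) ++ [false]) ++ v := by simp [ww]
  rw [hw, subword_append_left _ _ _ (by intro i hi; simp at hi; simp; omega)]
  have h2 : u.length + 2 = (u ++ [true]).length + 1 := by simp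
  rw [h2]
  exact subword_concat_last (u ++ [true]) false

lemma pointwise (A B : Finset ℕ) (hA' : A ⊆ Finset.Icc 1 (u.length + 1))
    (hB' : B ⊆ Finset.Icc (u.length + 2) (u.length + v.length + 2)) :
    (Polynomial.X + 1) ^ kappa (subword (ww u v) (A ∪ B)) *
        Polynomial.X ^ ((A ∪ B).card + 1 - kappa (subword (ww u v) (A ∪ B))) -
      (Polynomial.X + 1) ^ kappa (subword (ww' u v) (A ∪ B)) *
        Polynomial.X ^ ((A ∪ B).card + 1 - kappa (subword (ww' u v) (A ∪ B))) =
    hA (ww u v) A * hB (ww u v) B := by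
  classical
  have hm : (ww u v).length = u.length + v.length + 2 := ww_length u v
  have hm' : (ww' u v).length = u.length + v.length + 2 := ww'_length u v
  rcases eq_or_ne A ∅ with rfl | hAne
  · -- A empty : difference is zero
    rw [Finset.empty_union]
    rw [hA, if_pos rfl, zero_mul]
    have hsub := subB u v B hB'
    rw [hsub, kappa_map_not]
    exact sub_self _
  rcases eq_or_ne B ∅ with rfl | hBne
  · rw [Finset.union_empty]
    rw [hB, if_pos rfl, mul_zero]
    have hsub := subA u v A hA'
    rw [hsub.2, ← hsub.1]
    exact sub_self _
  -- main case
  have hdisj : Disjoint A B := by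
    rw [Finset.disjoint_left]
    intro i hiA hiB
    have h1 := Finset.mem_Icc.1 (hA' hiA)
    have h2 := Finset.mem_Icc.1 (hB' hiB)
    omega
  have hcard : (A ∪ B).card = A.card + B.card := Finset.card_union_of_disjoint hdisj
  have hAsub : A ⊆ Finset.Icc 1 (ww u v).length := by
    intro i hi; have := Finset.mem_Icc.1 (hA' hi); rw [Finset.mem_Icc, hm]; omega
  have hBsub : B ⊆ Finset.Icc 1 (ww u v).length := by
    intro i hi; have := Finset.mem_Icc.1 (hB' hi); rw [Finset.mem_Icc, hm]; omega
  have hlenA : (subword (ww u v) A).length = A.card := subword_length _ _ hAsub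
  have hlenB : (subword (ww u v) B).length = B.card := subword_length _ _ hBsub
  have hAne' : subword (ww u v) A ≠ [] := by
    intro h; rw [h] at hlenA
    exact hAne (Finset.card_eq_zero.1 hlenA.symm)
  have hBne' : subword (ww u v) B ≠ [] := by
    intro h; rw [h] at hlenB
    exact hBne (Finset.card_eq_zero.1 hlenB.symm)
  -- split lemmas
  have hsplit : subword (ww u v) (A ∪ B) = subword (ww u v) A ++ subword (ww u v) B := by
    apply subword_union _ _ _ (u.length + 1) (by omega)
    · intro i hi; exact (Finset.mem_Icc.1 (hA' hi)).2
    · intro i hi; have := Finset.mem_Icc.1 (hB' hi); omega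
  have hsplit' : subword (ww' u v) (A ∪ B) =
      subword (ww u v) A ++ (subword (ww u v) B).map (fun b => !b) := by
    have h1 : subword (ww' u v) (A ∪ B) = subword (ww' u v) A ++ subword (ww' u v) B := by
      apply subword_union _ _ _ (u.length + 1) (by omega)
      · intro i hi; exact (Finset.mem_Icc.1 (hA' hi)).2
      · intro i hi; have := Finset.mem_Icc.1 (hB' hi); omega
    rw [h1, (subA u v A hA').2, ← (subA u v A hA').1, subB u v B hB']
  obtain ⟨ae, hae⟩ : ∃ x, (subword (ww u v) A).getLast? = some x := by
    cases h : (subword (ww u v) A).getLast? with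
    | none => exact absurd (List.getLast?_eq_none_iff.1 h) hAne'
    | some x => exact ⟨x, rfl⟩
  obtain ⟨b0, hb0⟩ : ∃ x, (subword (ww u v) B).head? = some x := by
    cases h : (subword (ww u v) B).head? with
    | none => exact absurd (List.head?_eq_none_iff.1 h) hBne'
    | some x => exact ⟨x, rfl⟩
  set cA := kappa (subword (ww u v) A) with hcA
  set cB := kappa (subword (ww u v) B) with hcB
  have hcA2 : 2 ≤ cA := kappa_two_le _ hAne'
  have hcB2 : 2 ≤ cB := kappa_two_le _ hBne'
  have hcAle : cA ≤ A.card + 1 := by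
    have := kappa_le _ hAne'; rwa [hlenA] at this
  have hcBle : cB ≤ B.card + 1 := by
    have := kappa_le _ hBne'; rwa [hlenB] at this
  have hddA : cA = 2 + dd (subword (ww u v) A) := kappa_ne_nil hAne'
  have hddB : cB = 2 + dd (subword (ww u v) B) := kappa_ne_nil hBne'
  -- kappa of the two concatenations
  have hk1 : kappa (subword (ww u v) (A ∪ B)) =
      2 + dd (subword (ww u v) A) + dd (subword (ww u v) B) +
        (if (subword (ww u v) A).getLast? = (subword (ww u v) B).head? then 0 else 1) := by
    rw [hsplit, kappa_ne_nil (by simp [hAne']),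
      dd_append _ _ hAne' hBne']
    omega
  have hmapne : (subword (ww u v) B).map (fun b => !b) ≠ [] := by simpa using hBne'
  have hk2 : kappa (subword (ww' u v) (A ∪ B)) =
      2 + dd (subword (ww u v) A) + dd (subword (ww u v) B) +
        (if (subword (ww u v) A).getLast? =
            ((subword (ww u v) B).map (fun b => !b)).head? then 0 else 1) := by
    rw [hsplit', kappa_ne_nil (by simp [hAne']),
      dd_append _ _ hAne' hmapne, dd_map_not]
    omega
  have hhead' : ((subword (ww u v) B).map (fun b => !b)).head? = some (!b0) := by
    rw [List.head?_map, hb0]; rfl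
  rw [hA, if_neg hAne, hB, if_neg hBne, hae, hb0]
  have hkd := key_diff cA cB A.card B.card hcA2 hcB2 hcAle hcBle
  rw [hae, hb0] at hk1
  rw [hae, hhead'] at hk2
  cases ae <;> cases b0
  · -- ae = false, b0 = false : e = 0, e' = 1, signs (-1)*(1)
    simp only [Option.some.injEq, Bool.not_false, Bool.not_true, Bool.false_eq_true,
      Bool.true_eq_false, if_true, if_false, reduceIte] at hk1 hk2 ⊢
    have e1 : kappa (subword (ww u v) (A ∪ B)) = cA + cB - 2 := by omega
    have e2 : kappa (subword (ww' u v) (A ∪ B)) = cA + cB - 1 := by omega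
    rw [e1, e2, hcard]
    linear_combination (-1 : Polynomial ℤ) * hkd
  · -- ae = false, b0 = true : e = 1, e' = 0, signs (-1)*(-1)
    simp only [Option.some.injEq, Bool.not_false, Bool.not_true, Bool.false_eq_true,
      Bool.true_eq_false, if_true, if_false, reduceIte] at hk1 hk2 ⊢
    have e1 : kappa (subword (ww u v) (A ∪ B)) = cA + cB - 1 := by omega
    have e2 : kappa (subword (ww' u v) (A ∪ B)) = cA + cB - 2 := by omega
    rw [e1, e2, hcard]
    linear_combination hkd
  · -- ae = true, b0 = false : e = 1, e' = 0, signs 1*1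
    simp only [Option.some.injEq, Bool.not_false, Bool.not_true, Bool.false_eq_true,
      Bool.true_eq_false, if_true, if_false, reduceIte] at hk1 hk2 ⊢
    have e1 : kappa (subword (ww u v) (A ∪ B)) = cA + cB - 1 := by omega
    have e2 : kappa (subword (ww' u v) (A ∪ B)) = cA + cB - 2 := by omega
    rw [e1, e2, hcard]
    linear_combination hkd
  · -- ae = true, b0 = true : e = 0, e' = 1, signs 1*(-1)
    simp only [Option.some.injEq, Bool.not_false, Bool.not_true, Bool.false_eq_true,
      Bool.true_eq_false, if_true, if_false, reduceIte] at hk1 hk2 ⊢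
    have e1 : kappa (subword (ww u v) (A ∪ B)) = cA + cB - 2 := by omega
    have e2 : kappa (subword (ww' u v) (A ∪ B)) = cA + cB - 1 := by omega
    rw [e1, e2, hcard]
    linear_combination (-1 : Polynomial ℤ) * hkd

end Words


section Main

open Polynomial

variable (u v : List Bool)

lemma main_eq :
    fPoly (u ++ [true, false] ++ v) -
        fPoly (u ++ [true, true] ++ v.map (fun b => !b)) =
      (∑ A ∈ (Finset.Icc 1 (u.length + 1)).powerset, hA (ww u v) A) *
        (∑ B ∈ (Finset.Icc (u.length + 2) (u.length + v.length + 2)).powerset,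
          hB (ww u v) B) := by
  classical
  rw [← ww_eq, ← ww'_eq]
  unfold fPoly
  rw [ww_length, ww'_length]
  set m := u.length + v.length + 2 with hm
  have hcancel : ∀ x y : Polynomial ℤ, 1 + x - (1 + y) = x - y := by intros; ring
  rw [hcancel, ← Finset.sum_sub_distrib, Finset.sum_mul_sum, ← Finset.sum_product']
  set P1 := Finset.Icc 1 (u.length + 1) with hP1
  set P2 := Finset.Icc (u.length + 2) m with hP2
  have hunion : Finset.Icc 1 m = P1 ∪ P2 := by
    ext i
    simp only [Finset.mem_Icc, Finset.mem_union, hP1, hP2, hm]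
    omega
  rw [hunion]
  apply Finset.sum_bij' (i := fun T _ => (T ∩ P1, T ∩ P2))
    (j := fun p _ => p.1 ∪ p.2)
  · -- hi
    intro T hT
    simp only [Finset.mem_product, Finset.mem_powerset]
    exact ⟨Finset.inter_subset_right, Finset.inter_subset_right⟩
  · -- hj
    intro p hp
    rw [Finset.mem_product, Finset.mem_powerset, Finset.mem_powerset] at hp
    rw [Finset.mem_powerset]
    exact Finset.union_subset_union hp.1 hp.2
  · -- left inverse
    intro T hT
    show (T ∩ P1) ∪ (T ∩ P2) = T
    rw [← Finset.inter_union_distrib_left]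
    exact Finset.inter_eq_left.2 (Finset.mem_powerset.1 hT)
  · -- right inverse
    intro p hp
    rw [Finset.mem_product, Finset.mem_powerset, Finset.mem_powerset] at hp
    have hdisj12 : ∀ i, i ∈ P1 → i ∈ P2 → False := by
      intro i h1 h2
      rw [hP1, Finset.mem_Icc] at h1
      rw [hP2, Finset.mem_Icc] at h2
      omega
    have h1 : (p.1 ∪ p.2) ∩ P1 = p.1 := by
      rw [Finset.union_inter_distrib_right, Finset.inter_eq_left.2 hp.1]
      have : p.2 ∩ P1 = ∅ := by
        rw [Finset.eq_empty_iff_forall_notMem]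
        intro i hi
        rw [Finset.mem_inter] at hi
        exact hdisj12 i hi.2 (hp.2 hi.1)
      rw [this, Finset.union_empty]
    have h2 : (p.1 ∪ p.2) ∩ P2 = p.2 := by
      rw [Finset.union_inter_distrib_right, Finset.inter_eq_left.2 hp.2]
      have : p.1 ∩ P2 = ∅ := by
        rw [Finset.eq_empty_iff_forall_notMem]
        intro i hi
        rw [Finset.mem_inter] at hi
        exact hdisj12 i (hp.1 hi.1) hi.2
      rw [this, Finset.empty_union]
    show ((p.1 ∪ p.2) ∩ P1, (p.1 ∪ p.2) ∩ P2) = p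
    rw [h1, h2]
  · -- values
    intro T hT
    rw [Finset.mem_powerset] at hT
    have hT1 : T ∩ P1 ⊆ P1 := Finset.inter_subset_right
    have hT2 : T ∩ P2 ⊆ P2 := Finset.inter_subset_right
    have hTu : (T ∩ P1) ∪ (T ∩ P2) = T := by
      rw [← Finset.inter_union_distrib_left]
      exact Finset.inter_eq_left.2 hT
    conv_lhs => rw [← hTu]
    exact pointwise u v (T ∩ P1) (T ∩ P2) hT1 hT2

end Main


section Decomp

open Polynomial

noncomputable def gH (w : List Bool) (S : Finset ℕ) : Polynomial ℤ :=
  if S = ∅ then pt 2 1 else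
    pt (kappa (subword w S)) S.card * X +
      (if (subword w S).getLast? = some true then pt (kappa (subword w S)) S.card else 0)

noncomputable def gG (w : List Bool) (S : Finset ℕ) : Polynomial ℤ :=
  if S = ∅ then pt 2 1 else
    pt (kappa (subword w S)) S.card * X +
      (if (subword w S).head? = some false then pt (kappa (subword w S)) S.card else 0)

lemma pt21 : pt 2 1 = X + 1 := by
  unfold pt
  norm_num

variable (u v : List Bool)

lemma Hsum :
    ∑ A ∈ (Finset.Icc 1 (u.length + 1)).powerset, hA (ww u v) A =
      ∑ S ∈ (Finset.Icc 1 u.length).powerset, gH (ww u v) S := by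
  classical
  have hins : Finset.Icc 1 (u.length + 1) = insert (u.length + 1) (Finset.Icc 1 u.length) := by
    ext i
    simp only [Finset.mem_Icc, Finset.mem_insert]
    omega
  rw [hins, Finset.sum_powerset_insert (by simp)]
  rw [← Finset.sum_add_distrib]
  apply Finset.sum_congr rfl
  intro S hS
  rw [Finset.mem_powerset] at hS
  have hm : (ww u v).length = u.length + v.length + 2 := ww_length u v
  rcases eq_or_ne S ∅ with rfl | hSne
  · rw [hA, if_pos rfl, zero_add, gH, if_pos rfl]
    have h1 : (insert (u.length + 1) (∅ : Finset ℕ)) = {u.length + 1} := rfl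
    rw [h1, hA, if_neg (by simp), subw_a1]
    have hk : kappa [true] = 2 := rfl
    rw [hk]
    simp [pt21]
  · -- nonempty case
    have hSsub : S ⊆ Finset.Icc 1 (ww u v).length := by
      intro i hi
      have := Finset.mem_Icc.1 (hS hi)
      rw [Finset.mem_Icc, hm]
      omega
    have hlen : (subword (ww u v) S).length = S.card := subword_length _ _ hSsub
    have hne' : subword (ww u v) S ≠ [] := by
      intro h; rw [h] at hlen
      exact hSne (Finset.card_eq_zero.1 hlen.symm)
    have hnotmem : u.length + 1 ∉ S := by
      intro hmem
      have := Finset.mem_Icc.1 (hS hmem)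
      omega
    have hcard : (insert (u.length + 1) S).card = S.card + 1 :=
      Finset.card_insert_of_notMem hnotmem
    have hinsu : insert (u.length + 1) S = S ∪ {u.length + 1} := by
      ext i
      simp only [Finset.mem_insert, Finset.mem_union, Finset.mem_singleton]
      tauto
    have hsplit : subword (ww u v) (insert (u.length + 1) S) =
        subword (ww u v) S ++ [true] := by
      rw [hinsu]
      rw [subword_union _ _ _ u.length (by omega)
        (fun i hi => (Finset.mem_Icc.1 (hS hi)).2)
        (fun i hi => by simp at hi; omega)]
      rw [subw_a1]
    have hlast : (subword (ww u v) (insert (u.length + 1) S)).getLast? = some true := by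
      rw [hsplit]; simp
    have hkins : kappa (subword (ww u v) (insert (u.length + 1) S)) =
        kappa (subword (ww u v) S) +
          (if (subword (ww u v) S).getLast? = some true then 0 else 1) := by
      rw [hsplit, kappa_ne_nil (by simp [hne']), dd_append _ _ hne' (by simp),
        kappa_ne_nil hne']
      have hdd1 : dd [true] = 0 := rfl
      have hh : ([true] : List Bool).head? = some true := rfl
      rw [hdd1, hh]
      omega
    set c := kappa (subword (ww u v) S) with hc
    have hc2 : 2 ≤ c := kappa_two_le _ hne'
    have hcle : c ≤ S.card + 1 := by
      have := kappa_le _ hne'; rwa [hlen] at this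
    rw [gH, if_neg hSne, hA, if_neg hSne, hA, if_neg (Finset.insert_ne_empty _ _), hlast, hcard, hkins]
    obtain ⟨ae, hae⟩ : ∃ x, (subword (ww u v) S).getLast? = some x := by
      cases h : (subword (ww u v) S).getLast? with
      | none => exact absurd (List.getLast?_eq_none_iff.1 h) hne'
      | some x => exact ⟨x, rfl⟩
    rw [hae]
    cases ae
    · -- last = false : sign -1, e = 1
      simp only [Option.some.injEq, Bool.false_eq_true, if_false, if_true]
      rw [show c + 1 = c + 1 from rfl, pt_succ_succ c S.card (by omega)]
      ring
    · -- last = true : sign +1, e = 0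
      simp only [Option.some.injEq, if_true]
      rw [show c + 0 = c from rfl, pt_card_succ c S.card hcle]
      ring

lemma Gsum :
    ∑ B ∈ (Finset.Icc (u.length + 2) (u.length + v.length + 2)).powerset, hB (ww u v) B =
      ∑ S ∈ (Finset.Icc (u.length + 3) (u.length + v.length + 2)).powerset, gG (ww u v) S := by
  classical
  have hins : Finset.Icc (u.length + 2) (u.length + v.length + 2) =
      insert (u.length + 2) (Finset.Icc (u.length + 3) (u.length + v.length + 2)) := by
    ext i
    simp only [Finset.mem_Icc, Finset.mem_insert]
    omega
  rw [hins, Finset.sum_powerset_insert (by simp)]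
  rw [← Finset.sum_add_distrib]
  apply Finset.sum_congr rfl
  intro S hS
  rw [Finset.mem_powerset] at hS
  have hm : (ww u v).length = u.length + v.length + 2 := ww_length u v
  rcases eq_or_ne S ∅ with rfl | hSne
  · rw [hB, if_pos rfl, zero_add, gG, if_pos rfl]
    have h1 : (insert (u.length + 2) (∅ : Finset ℕ)) = {u.length + 2} := rfl
    rw [h1, hB, if_neg (by simp), subw_a2]
    have hk : kappa [false] = 2 := rfl
    rw [hk]
    simp [pt21]
  · have hSsub : S ⊆ Finset.Icc 1 (ww u v).length := by
      intro i hi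
      have := Finset.mem_Icc.1 (hS hi)
      rw [Finset.mem_Icc, hm]
      omega
    have hlen : (subword (ww u v) S).length = S.card := subword_length _ _ hSsub
    have hne' : subword (ww u v) S ≠ [] := by
      intro h; rw [h] at hlen
      exact hSne (Finset.card_eq_zero.1 hlen.symm)
    have hnotmem : u.length + 2 ∉ S := by
      intro hmem
      have := Finset.mem_Icc.1 (hS hmem)
      omega
    have hcard : (insert (u.length + 2) S).card = S.card + 1 :=
      Finset.card_insert_of_notMem hnotmem
    have hinsu : insert (u.length + 2) S = ({u.length + 2} : Finset ℕ) ∪ S := by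
      ext i
      simp only [Finset.mem_insert, Finset.mem_union, Finset.mem_singleton]
    have hsplit : subword (ww u v) (insert (u.length + 2) S) =
        [false] ++ subword (ww u v) S := by
      rw [hinsu]
      rw [subword_union _ _ _ (u.length + 2) (by omega)
        (fun i hi => by have h := Finset.mem_singleton.1 hi; omega)
        (fun i hi => by have := Finset.mem_Icc.1 (hS hi); omega)]
      rw [subw_a2]
    have hhead : (subword (ww u v) (insert (u.length + 2) S)).head? = some false := by
      rw [hsplit]; rfl
    have hkins : kappa (subword (ww u v) (insert (u.length + 2) S)) =
        kappa (subword (ww u v) S) +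
          (if (subword (ww u v) S).head? = some false then 0 else 1) := by
      rw [hsplit, kappa_ne_nil (by simp), dd_append _ _ (by simp) hne',
        kappa_ne_nil hne']
      have hdd1 : dd [false] = 0 := rfl
      have hh : ([false] : List Bool).getLast? = some false := rfl
      rw [hdd1, hh]
      have : (if some false = (subword (ww u v) S).head? then 0 else 1) =
          (if (subword (ww u v) S).head? = some false then 0 else 1) := by
        by_cases h : (subword (ww u v) S).head? = some false
        · rw [if_pos h, if_pos h.symm]
        · rw [if_neg h, if_neg (fun hh' => h hh'.symm)]
      omega
    set c := kappa (subword (ww u v) S) with hc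
    have hc2 : 2 ≤ c := kappa_two_le _ hne'
    have hcle : c ≤ S.card + 1 := by
      have := kappa_le _ hne'; rwa [hlen] at this
    rw [gG, if_neg hSne, hB, if_neg hSne, hB, if_neg (Finset.insert_ne_empty _ _), hhead, hcard, hkins]
    obtain ⟨b0, hb0⟩ : ∃ x, (subword (ww u v) S).head? = some x := by
      cases h : (subword (ww u v) S).head? with
      | none => exact absurd (List.head?_eq_none_iff.1 h) hne'
      | some x => exact ⟨x, rfl⟩
    rw [hb0]
    cases b0
    · -- head = false : sign +1, e = 0
      simp only [Option.some.injEq, if_true]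
      rw [show c + 0 = c from rfl, pt_card_succ c S.card hcle]
      ring
    · -- head = true : sign -1, e = 1
      simp only [Option.some.injEq, Bool.true_eq_false, if_false, if_true]
      rw [show c + 1 = c + 1 from rfl, pt_succ_succ c S.card (by omega)]
      ring

end Decomp


section Pos

open Polynomial

lemma gH_coeff_nonneg (w : List Bool) (S : Finset ℕ) (d : ℕ) : 0 ≤ (gH w S).coeff d := by
  unfold gH
  split
  · exact pt_coeff_nonneg _ _ _
  · rw [Polynomial.coeff_add]
    apply add_nonneg (ptX_coeff_nonneg _ _ _)
    split
    · exact pt_coeff_nonneg _ _ _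
    · simp

lemma gG_coeff_nonneg (w : List Bool) (S : Finset ℕ) (d : ℕ) : 0 ≤ (gG w S).coeff d := by
  unfold gG
  split
  · exact pt_coeff_nonneg _ _ _
  · rw [Polynomial.coeff_add]
    apply add_nonneg (ptX_coeff_nonneg _ _ _)
    split
    · exact pt_coeff_nonneg _ _ _
    · simp

lemma kappa_facts (w : List Bool) (S : Finset ℕ) (hS : S ⊆ Finset.Icc 1 w.length)
    (hne : S ≠ ∅) : 2 ≤ kappa (subword w S) ∧ kappa (subword w S) ≤ S.card + 1 := by
  have hlen : (subword w S).length = S.card := subword_length _ _ hS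
  have hne' : subword w S ≠ [] := by
    intro h; rw [h] at hlen
    exact hne (Finset.card_eq_zero.1 hlen.symm)
  refine ⟨kappa_two_le _ hne', ?_⟩
  have := kappa_le _ hne'
  rwa [hlen] at this

lemma gH_natDegree_le (w : List Bool) (S : Finset ℕ) (hS : S ⊆ Finset.Icc 1 w.length) :
    (gH w S).natDegree ≤ S.card + 1 := by
  unfold gH
  split
  · rw [pt_natDegree 2 1 le_rfl (by omega)]
    omega
  · rename_i hne
    obtain ⟨h2, hle⟩ := kappa_facts w S hS hne
    apply le_trans (Polynomial.natDegree_add_le _ _)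
    rw [max_le_iff]
    constructor
    · rw [ptX_natDegree _ _ h2 hle]
    · split
      · exact le_trans (pt_natDegree_le _ _ h2 hle) (by omega)
      · simp

lemma gG_natDegree_le (w : List Bool) (S : Finset ℕ) (hS : S ⊆ Finset.Icc 1 w.length) :
    (gG w S).natDegree ≤ S.card + 1 := by
  unfold gG
  split
  · rw [pt_natDegree 2 1 le_rfl (by omega)]
    omega
  · rename_i hne
    obtain ⟨h2, hle⟩ := kappa_facts w S hS hne
    apply le_trans (Polynomial.natDegree_add_le _ _)
    rw [max_le_iff]
    constructor
    · rw [ptX_natDegree _ _ h2 hle]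
    · split
      · exact le_trans (pt_natDegree_le _ _ h2 hle) (by omega)
      · simp

lemma gH_coeff_top (w : List Bool) (S : Finset ℕ) (hS : S ⊆ Finset.Icc 1 w.length)
    (hne : S ≠ ∅) : 0 < (gH w S).coeff (S.card + 1) := by
  obtain ⟨h2, hle⟩ := kappa_facts w S hS hne
  unfold gH
  rw [if_neg hne, Polynomial.coeff_add, ptX_coeff_top _ _ h2 hle]
  have : (0:ℤ) ≤ (if (subword w S).getLast? = some true
      then pt (kappa (subword w S)) S.card else 0).coeff (S.card + 1) := by
    split
    · exact pt_coeff_nonneg _ _ _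
    · simp
  omega

lemma gG_coeff_top (w : List Bool) (S : Finset ℕ) (hS : S ⊆ Finset.Icc 1 w.length)
    (hne : S ≠ ∅) : 0 < (gG w S).coeff (S.card + 1) := by
  obtain ⟨h2, hle⟩ := kappa_facts w S hS hne
  unfold gG
  rw [if_neg hne, Polynomial.coeff_add, ptX_coeff_top _ _ h2 hle]
  have : (0:ℤ) ≤ (if (subword w S).head? = some false
      then pt (kappa (subword w S)) S.card else 0).coeff (S.card + 1) := by
    split
    · exact pt_coeff_nonneg _ _ _
    · simp
  omega

lemma coeff_X_add_one_small (d : ℕ) (hd : d ≤ 1) : 0 < (X + 1 : Polynomial ℤ).coeff d := by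
  interval_cases d <;> simp [Polynomial.coeff_one]

variable (u v : List Bool)

lemma HH_coeff_nonneg (d : ℕ) :
    0 ≤ (∑ S ∈ (Finset.Icc 1 u.length).powerset, gH (ww u v) S).coeff d := by
  rw [Polynomial.finset_sum_coeff]
  exact Finset.sum_nonneg fun S _ => gH_coeff_nonneg _ _ _

lemma GG_coeff_nonneg (d : ℕ) :
    0 ≤ (∑ S ∈ (Finset.Icc (u.length + 3) (u.length + v.length + 2)).powerset,
      gG (ww u v) S).coeff d := by
  rw [Polynomial.finset_sum_coeff]
  exact Finset.sum_nonneg fun S _ => gG_coeff_nonneg _ _ _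

lemma HH_natDegree_le :
    (∑ S ∈ (Finset.Icc 1 u.length).powerset, gH (ww u v) S).natDegree ≤ u.length + 1 := by
  apply Polynomial.natDegree_sum_le_of_forall_le
  intro S hS
  rw [Finset.mem_powerset] at hS
  have hsub : S ⊆ Finset.Icc 1 (ww u v).length := by
    intro i hi
    have := Finset.mem_Icc.1 (hS hi)
    rw [Finset.mem_Icc, ww_length]
    omega
  have hcard : S.card ≤ u.length := by
    have := Finset.card_le_card hS
    rwa [Nat.card_Icc, Nat.add_sub_cancel] at this
  exact le_trans (gH_natDegree_le _ _ hsub) (by omega)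

lemma GG_natDegree_le :
    (∑ S ∈ (Finset.Icc (u.length + 3) (u.length + v.length + 2)).powerset,
      gG (ww u v) S).natDegree ≤ v.length + 1 := by
  apply Polynomial.natDegree_sum_le_of_forall_le
  intro S hS
  rw [Finset.mem_powerset] at hS
  have hsub : S ⊆ Finset.Icc 1 (ww u v).length := by
    intro i hi
    have := Finset.mem_Icc.1 (hS hi)
    rw [Finset.mem_Icc, ww_length]
    omega
  have hcard : S.card ≤ v.length := by
    have := Finset.card_le_card hS
    rw [Nat.card_Icc] at this
    omega
  exact le_trans (gG_natDegree_le _ _ hsub) (by omega)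

lemma HH_coeff_pos (d : ℕ) (hd : d ≤ u.length + 1) :
    0 < (∑ S ∈ (Finset.Icc 1 u.length).powerset, gH (ww u v) S).coeff d := by
  rw [Polynomial.finset_sum_coeff]
  apply Finset.sum_pos'
  · intro S _
    exact gH_coeff_nonneg _ _ _
  · rcases le_or_gt d 1 with hd1 | hd2
    · refine ⟨∅, Finset.empty_mem_powerset _, ?_⟩
      rw [gH, if_pos rfl, pt21]
      exact coeff_X_add_one_small d hd1
    · refine ⟨Finset.Icc 1 (d - 1), ?_, ?_⟩
      · rw [Finset.mem_powerset]
        exact Finset.Icc_subset_Icc_right (by omega)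
      · have hcard : (Finset.Icc 1 (d - 1)).card = d - 1 := by
          rw [Nat.card_Icc]; omega
        have hne : Finset.Icc 1 (d - 1) ≠ ∅ := by
          rw [← Finset.nonempty_iff_ne_empty]
          exact Finset.nonempty_Icc.2 (by omega)
        have hsub : Finset.Icc 1 (d - 1) ⊆ Finset.Icc 1 (ww u v).length := by
          apply Finset.Icc_subset_Icc_right
          rw [ww_length]
          omega
        have := gH_coeff_top (ww u v) _ hsub hne
        rw [hcard] at this
        have hdd : d - 1 + 1 = d := by omega
        rwa [hdd] at this

lemma GG_coeff_pos (d : ℕ) (hd : d ≤ v.length + 1) :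
    0 < (∑ S ∈ (Finset.Icc (u.length + 3) (u.length + v.length + 2)).powerset,
      gG (ww u v) S).coeff d := by
  rw [Polynomial.finset_sum_coeff]
  apply Finset.sum_pos'
  · intro S _
    exact gG_coeff_nonneg _ _ _
  · rcases le_or_gt d 1 with hd1 | hd2
    · refine ⟨∅, Finset.empty_mem_powerset _, ?_⟩
      rw [gG, if_pos rfl, pt21]
      exact coeff_X_add_one_small d hd1
    · refine ⟨Finset.Icc (u.length + 3) (u.length + 1 + d), ?_, ?_⟩
      · rw [Finset.mem_powerset]
        exact Finset.Icc_subset_Icc_right (by omega)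
      · have hcard : (Finset.Icc (u.length + 3) (u.length + 1 + d)).card = d - 1 := by
          rw [Nat.card_Icc]; omega
        have hne : Finset.Icc (u.length + 3) (u.length + 1 + d) ≠ ∅ := by
          rw [← Finset.nonempty_iff_ne_empty]
          exact Finset.nonempty_Icc.2 (by omega)
        have hsub : Finset.Icc (u.length + 3) (u.length + 1 + d) ⊆
            Finset.Icc 1 (ww u v).length := by
          intro i hi
          have := Finset.mem_Icc.1 hi
          rw [Finset.mem_Icc, ww_length]
          omega
        have := gG_coeff_top (ww u v) _ hsub hne
        rw [hcard] at this
        have hdd : d - 1 + 1 = d := by omega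
        rwa [hdd] at this

end Pos

end Stmt9

/-- for `|u| + |v| = n - 3`, the difference
`F(u·y·x·v) - F(u·y·y·v̄)` has degree `n-1` and strictly positive coefficients in
degrees `0,…,n-1` (here `x = false`, `y = true`). -/
theorem stmt9 (n : ℕ) (u v : List Bool) (h : u.length + v.length + 3 = n) :
    (fPoly (u ++ [true, false] ++ v) -
        fPoly (u ++ [true, true] ++ v.map (fun b => !b))).natDegree = n - 1 ∧
    ∀ i ≤ n - 1,
      0 < (fPoly (u ++ [true, false] ++ v) -
            fPoly (u ++ [true, true] ++ v.map (fun b => !b))).coeff i := by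
  classical
  open Stmt9 in
  have hD : fPoly (u ++ [true, false] ++ v) -
      fPoly (u ++ [true, true] ++ v.map (fun b => !b)) =
      (∑ S ∈ (Finset.Icc 1 u.length).powerset, Stmt9.gH (Stmt9.ww u v) S) *
        (∑ S ∈ (Finset.Icc (u.length + 3) (u.length + v.length + 2)).powerset,
          Stmt9.gG (Stmt9.ww u v) S) := by
    rw [Stmt9.main_eq, Stmt9.Hsum, Stmt9.Gsum]
  rw [hD]
  have hn1 : n - 1 = (u.length + 1) + (v.length + 1) := by omega
  have hpos : ∀ i ≤ n - 1,
      0 < ((∑ S ∈ (Finset.Icc 1 u.length).powerset, Stmt9.gH (Stmt9.ww u v) S) *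
        (∑ S ∈ (Finset.Icc (u.length + 3) (u.length + v.length + 2)).powerset,
          Stmt9.gG (Stmt9.ww u v) S)).coeff i := by
    intro i hi
    rw [Polynomial.coeff_mul]
    apply Finset.sum_pos'
    · rintro ⟨p1, p2⟩ _
      exact mul_nonneg (Stmt9.HH_coeff_nonneg u v p1) (Stmt9.GG_coeff_nonneg u v p2)
    · refine ⟨(min i (u.length + 1), i - min i (u.length + 1)), ?_, ?_⟩
      · rw [Finset.HasAntidiagonal.mem_antidiagonal]
        show min i (u.length + 1) + (i - min i (u.length + 1)) = i
        omega
      · exact mul_pos (Stmt9.HH_coeff_pos u v _ (by omega))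
          (Stmt9.GG_coeff_pos u v _ (by omega))
  refine ⟨?_, hpos⟩
  apply le_antisymm
  · apply le_trans (Polynomial.natDegree_mul_le)
    rw [hn1]
    exact add_le_add (Stmt9.HH_natDegree_le u v) (Stmt9.GG_natDegree_le u v)
  · exact Polynomial.le_natDegree_of_ne_zero (ne_of_gt (hpos (n - 1) le_rfl))
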